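/- Let R be a commutative ring and I ⊆ R an ideal such that the quotient R/I is flat as an R-module. Let A* be a (ℤ-graded) cochain complex of R-modules whose cohomology vanishes in every degree. Then the subcomplex I·A* (whose degree-n term is the submodule I·A^n, with the restricted differential) also has vanishing cohomology in every degree. -/
import Mathlib


noncomputable section

/-- A `ℤ`-graded cochain complex of `R`-modules. -/
structure Cx (R : Type) [CommRing R] where
  X : ℤ → Type
  [acg : ∀ n, AddCommGroup (X n)]
  [mod : ∀ n, Module R (X n)]
  d : ∀ n, X n →ₗ[R] X (n + 1)
  dd : ∀ (n : ℤ) (x : X n), d (n + 1) (d n x) = 0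

attribute [instance] Cx.acg Cx.mod

variable {R : Type} [CommRing R]

/-- Transport along an equality of degrees. -/
def Cx.cast (A : Cx R) {m n : ℤ} (h : m = n) : A.X m ≃ₗ[R] A.X n := by
  subst h; exact LinearEquiv.refl R (A.X m)

/-- The differential arriving at degree `n`. -/
def Cx.dFrom (A : Cx R) (n : ℤ) : A.X (n - 1) →ₗ[R] A.X n :=
  (A.cast (by omega : n - 1 + 1 = n)).toLinearMap ∘ₗ A.d (n - 1)

open TensorProduct in
lemma key {R : Type} [CommRing R] (I : Ideal R) (hflat : Module.Flat R (R ⧸ I))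
    {M : Type} [AddCommGroup M] [Module R M] (p : Submodule R M) {x : M}
    (hx : x ∈ p) (hIx : x ∈ I • (⊤ : Submodule R M)) : x ∈ I • p := by
  have hinj : Function.Injective (LinearMap.lTensor (R ⧸ I) p.subtype) :=
    Module.Flat.lTensor_preserves_injective_linearMap p.subtype p.injective_subtype
  have e1 : ((1 : R ⧸ I) ⊗ₜ[R] x : (R ⧸ I) ⊗[R] M) = 0 := by
    apply (quotTensorEquivQuotSMul M I).injective
    rw [map_zero, show (1 : R ⧸ I) = Ideal.Quotient.mk I 1 from rfl,
      quotTensorEquivQuotSMul_mk_tmul, one_smul]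
    exact (Submodule.Quotient.mk_eq_zero _).mpr hIx
  have h2 : ((1 : R ⧸ I) ⊗ₜ[R] (⟨x, hx⟩ : p) : (R ⧸ I) ⊗[R] p) = 0 := by
    apply hinj
    simpa using e1
  have h3 : (⟨x, hx⟩ : p) ∈ (I • ⊤ : Submodule R p) := by
    rw [← Submodule.Quotient.mk_eq_zero]
    have := congrArg (quotTensorEquivQuotSMul p I) h2
    rwa [map_zero, show (1 : R ⧸ I) = Ideal.Quotient.mk I 1 from rfl,
      quotTensorEquivQuotSMul_mk_tmul, one_smul] at this
  have h4 : x ∈ Submodule.map p.subtype (I • ⊤ : Submodule R p) := ⟨⟨x, hx⟩, h3, rfl⟩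
  rwa [Submodule.map_smul'', Submodule.map_top, Submodule.range_subtype] at h4

/-- STATEMENT 13: let `R` be a commutative ring and `I ⊆ R` an ideal such that `R/I` is flat
as an `R`-module. If `A*` is a `ℤ`-graded cochain complex of `R`-modules whose cohomology
vanishes in every degree (every cocycle is a coboundary), then the subcomplex `I·A*` also has
vanishing cohomology in every degree: every element of `I·Aⁿ` killed by the differential is
the differential of an element of `I·Aⁿ⁻¹`. -/

theorem statement13 (R : Type) [CommRing R] (I : Ideal R)
    (hflat : Module.Flat R (R ⧸ I)) (A : Cx R)
    (hexact : ∀ (n : ℤ) (x : A.X n), A.d n x = 0 →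
      ∃ y : A.X (n - 1), A.dFrom n y = x) :
    ∀ (n : ℤ) (x : A.X n), x ∈ (I • (⊤ : Submodule R (A.X n))) → A.d n x = 0 →
      ∃ y ∈ (I • (⊤ : Submodule R (A.X (n - 1)))), A.dFrom n y = x := by
  intro n x hxI hdx
  obtain ⟨y, hy⟩ := hexact n x hdx
  have hxP : x ∈ I • LinearMap.range (A.dFrom n) :=
    key I hflat _ ⟨y, hy⟩ hxI
  rw [LinearMap.range_eq_map, ← Submodule.map_smul''] at hxP
  obtain ⟨w, hw, hwx⟩ := hxP
  exact ⟨w, by simpa using hw, hwx⟩
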